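/- Let V be a vector space of dimension 4 over an algebraically closed field K of characteristic zero, and let L_1, L_2 be 2-dimensional subspaces with V = L_1 ⊕ L_2. Let H_1 be a nonzero alternating bilinear form on V with rad(H_1) = L_2 and H_2 a nonzero alternating bilinear form with rad(H_2) = L_1. Then span(H_1, H_2) is the unique 2-dimensional subspace N of the space of alternating bilinear forms on V with the property that every nonzero A ∈ N has dim rad(A) ≤ 2 and the set of nonzero radicals {rad(A) : A ∈ N, A ≠ 0, rad(A) ≠ 0} equals {L_1, L_2}. -/

import Mathlib

section helpers
variable {K : Type*} [Field K] {V : Type*} [AddCommGroup V] [Module K V]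

lemma skew_of_alt (A : V →ₗ[K] V →ₗ[K] K) (h : ∀ v, A v v = 0) (v w : V) :
    A v w = - A w v := by
  have hvw := h (v + w)
  simp only [map_add, LinearMap.add_apply, h v, h w] at hvw
  linear_combination hvw

lemma vanish' {M : Type*} [AddCommGroup M] [Module K M] (f : V →ₗ[K] M)
    (L : Submodule K V) (e₁ e₂ : V)
    (hspan : L ⊔ Submodule.span K {e₁, e₂} = ⊤)
    (hL : L ≤ LinearMap.ker f) (h1 : f e₁ = 0) (h2 : f e₂ = 0) : f = 0 := by
  rw [← LinearMap.ker_eq_top, ← top_le_iff, ← hspan]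
  refine sup_le hL ?_
  rw [Submodule.span_le]
  rintro x (rfl | rfl) <;> simpa [LinearMap.mem_ker]

lemma keyzero (A : V →ₗ[K] V →ₗ[K] K) (h : ∀ v, A v v = 0)
    (L : Submodule K V) (hL : L ≤ LinearMap.ker A) (e₁ e₂ : V)
    (h12 : A e₁ e₂ = 0)
    (hspan : L ⊔ Submodule.span K {e₁, e₂} = ⊤) : A = 0 := by
  have hLv : ∀ x ∈ L, ∀ w, A x w = 0 := by
    intro x hx w
    have hx0 : A x = 0 := hL hx
    rw [hx0]; rfl
  have hLker : ∀ v, L ≤ LinearMap.ker (A v) := by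
    intro v x hx
    rw [LinearMap.mem_ker, skew_of_alt A h, hLv x hx v, neg_zero]
  have he₁ : A e₁ = 0 := vanish' (A e₁) L e₁ e₂ hspan (hLker e₁) (h e₁) h12
  have he₂ : A e₂ = 0 := by
    refine vanish' (A e₂) L e₁ e₂ hspan (hLker e₂) ?_ (h e₂)
    rw [skew_of_alt A h, h12, neg_zero]
  exact vanish' A L e₁ e₂ hspan hL he₁ he₂

lemma exists_scalar (H A : V →ₗ[K] V →ₗ[K] K)
    (hHalt : ∀ v, H v v = 0) (hAalt : ∀ v, A v v = 0)
    (L : Submodule K V) (e₁ e₂ : V)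
    (hspan : L ⊔ Submodule.span K {e₁, e₂} = ⊤)
    (hLH : L ≤ LinearMap.ker H) (hLA : L ≤ LinearMap.ker A)
    (hne : H e₁ e₂ ≠ 0) : ∃ c : K, A = c • H := by
  refine ⟨A e₁ e₂ / H e₁ e₂, ?_⟩
  have h0 : A - (A e₁ e₂ / H e₁ e₂) • H = 0 := by
    refine keyzero _ ?_ L ?_ e₁ e₂ ?_ hspan
    · intro v
      simp [LinearMap.sub_apply, LinearMap.smul_apply, hAalt v, hHalt v]
    · intro x hx
      have h1 : A x = 0 := hLA hx
      have h2 : H x = 0 := hLH hx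
      simp [LinearMap.mem_ker, LinearMap.sub_apply, LinearMap.smul_apply, h1, h2]
    · simp only [LinearMap.sub_apply, LinearMap.smul_apply, smul_eq_mul]
      field_simp
      ring
  have := (sub_eq_zero (G := V →ₗ[K] V →ₗ[K] K)).mp h0
  exact this

lemma span_coe_basis (L : Submodule K V) (b : Module.Basis (Fin 2) K L) :
    Submodule.span K {(b 0 : V), (b 1 : V)} = L := by
  have h : ({(b 0 : V), (b 1 : V)} : Set V) = Set.range (L.subtype ∘ b) := by
    ext x
    simp [Fin.exists_fin_two, eq_comm]
  rw [h, Set.range_comp, Submodule.span_image, b.span_eq, Submodule.map_subtype_top]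

end helpers

theorem statement14 (K : Type*) [Field K] [IsAlgClosed K] [CharZero K]
    (V : Type*) [AddCommGroup V] [Module K V] [FiniteDimensional K V]
    (hV : Module.finrank K V = 4)
    (L₁ L₂ : Submodule K V) (hL₁ : Module.finrank K L₁ = 2)
    (hL₂ : Module.finrank K L₂ = 2) (hcompl : IsCompl L₁ L₂)
    (H₁ H₂ : V →ₗ[K] V →ₗ[K] K) (hH₁ne : H₁ ≠ 0) (hH₂ne : H₂ ≠ 0)
    (hH₁alt : ∀ v, H₁ v v = 0) (hH₂alt : ∀ v, H₂ v v = 0)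
    (hH₁rad : LinearMap.ker H₁ = L₂) (hH₂rad : LinearMap.ker H₂ = L₁) :
    ∀ N : Submodule K (V →ₗ[K] V →ₗ[K] K),
      ((∀ A ∈ N, ∀ v, A v v = 0) ∧
        Module.finrank K N = 2 ∧
        (∀ A ∈ N, A ≠ 0 → Module.finrank K (LinearMap.ker A) ≤ 2) ∧
        {W : Submodule K V | ∃ A ∈ N, A ≠ 0 ∧ LinearMap.ker A ≠ ⊥ ∧ LinearMap.ker A = W} =
          {L₁, L₂})
      ↔ N = Submodule.span K {H₁, H₂} := by
  have hsup : L₁ ⊔ L₂ = ⊤ := hcompl.sup_eq_top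
  have hinf : L₁ ⊓ L₂ = ⊥ := hcompl.inf_eq_bot
  -- bases of L₁ and L₂
  obtain ⟨b₁⟩ : Nonempty (Module.Basis (Fin 2) K L₁) := ⟨Module.finBasisOfFinrankEq K L₁ hL₁⟩
  obtain ⟨b₂⟩ : Nonempty (Module.Basis (Fin 2) K L₂) := ⟨Module.finBasisOfFinrankEq K L₂ hL₂⟩
  set e : Fin 2 → V := fun i => (b₁ i : V) with he
  set f : Fin 2 → V := fun i => (b₂ i : V) with hf
  have heL : ∀ i, e i ∈ L₁ := fun i => (b₁ i).2
  have hfL : ∀ i, f i ∈ L₂ := fun i => (b₂ i).2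
  have hspanE : Submodule.span K {e 0, e 1} = L₁ := span_coe_basis L₁ b₁
  have hspanF : Submodule.span K {f 0, f 1} = L₂ := span_coe_basis L₂ b₂
  have hsupE : L₂ ⊔ Submodule.span K {e 0, e 1} = ⊤ := by
    rw [hspanE, sup_comm]; exact hsup
  have hsupF : L₁ ⊔ Submodule.span K {f 0, f 1} = ⊤ := by
    rw [hspanF]; exact hsup
  have hL₂H₁ : L₂ ≤ LinearMap.ker H₁ := le_of_eq hH₁rad.symm
  have hL₁H₂ : L₁ ≤ LinearMap.ker H₂ := le_of_eq hH₂rad.symm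
  -- nonvanishing on bases
  have hne1 : H₁ (e 0) (e 1) ≠ 0 := by
    intro h
    exact hH₁ne (keyzero H₁ hH₁alt L₂ hL₂H₁ (e 0) (e 1) h hsupE)
  have hne2 : H₂ (f 0) (f 1) ≠ 0 := by
    intro h
    exact hH₂ne (keyzero H₂ hH₂alt L₁ hL₁H₂ (f 0) (f 1) h hsupF)
  -- H₂ kills L₁ vectors on either side, similarly H₁
  have hH₂e : ∀ i, H₂ (e i) = 0 := fun i => hL₁H₂ (heL i)
  have hH₁f : ∀ i, H₁ (f i) = 0 := fun i => hL₂H₁ (hfL i)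
  -- linear independence and rank of the span
  have hind : LinearIndependent K ![H₁, H₂] := by
    rw [LinearIndependent.pair_iff (R := K) (M := V →ₗ[K] V →ₗ[K] K)]
    intro s t hst
    constructor
    · have h0 := congrArg (fun G => G (e 0) (e 1)) hst
      simp only [LinearMap.add_apply, LinearMap.smul_apply, smul_eq_mul,
        LinearMap.zero_apply, hH₂e 0] at h0
      have : s * H₁ (e 0) (e 1) = 0 := by simpa using h0
      exact (mul_eq_zero.mp this).resolve_right hne1
    · have h0 := congrArg (fun G => G (f 0) (f 1)) hst
      simp only [LinearMap.add_apply, LinearMap.smul_apply, smul_eq_mul,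
        LinearMap.zero_apply, hH₁f 0] at h0
      have : t * H₂ (f 0) (f 1) = 0 := by simpa using h0
      exact (mul_eq_zero.mp this).resolve_right hne2
  have hrank : Module.finrank K (Submodule.span K {H₁, H₂}) = 2 := by
    have hs : ({H₁, H₂} : Set (V →ₗ[K] V →ₗ[K] K)) = Set.range ![H₁, H₂] := by
      ext x
      simp [Fin.exists_fin_two, eq_comm, or_comm]
    rw [hs, finrank_span_eq_card hind, Fintype.card_fin]
  have hL₁ne : L₁ ≠ ⊥ := by
    intro h
    rw [h, finrank_bot] at hL₁
    exact two_ne_zero hL₁.symm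
  have hL₂ne : L₂ ≠ ⊥ := by
    intro h
    rw [h, finrank_bot] at hL₂
    exact two_ne_zero hL₂.symm
  -- kernels of combinations with both coefficients nonzero are trivial
  have hkerbot : ∀ a b : K, a ≠ 0 → b ≠ 0 →
      LinearMap.ker (a • H₁ + b • H₂) = ⊥ := by
    intro a b ha hb
    rw [Submodule.eq_bot_iff]
    intro v hv
    rw [LinearMap.mem_ker] at hv
    have hv' : ∀ w, a * H₁ v w + b * H₂ v w = 0 := by
      intro w
      have := congrArg (fun g => g w) hv
      simpa [LinearMap.add_apply, LinearMap.smul_apply, smul_eq_mul] using this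
    have hvmem : v ∈ L₁ ⊔ L₂ := by rw [hsup]; exact Submodule.mem_top
    obtain ⟨x, hx, y, hy, rfl⟩ := Submodule.mem_sup.mp hvmem
    have hH₁y : H₁ y = 0 := hL₂H₁ hy
    have hH₂x : H₂ x = 0 := hL₁H₂ hx
    have hx0 : x = 0 := by
      have hfx : H₁ x = 0 := by
        refine vanish' (H₁ x) L₂ (e 0) (e 1) hsupE ?_ ?_ ?_
        · intro w hw
          rw [LinearMap.mem_ker, skew_of_alt H₁ hH₁alt]
          have : H₁ w = 0 := hL₂H₁ hw
          rw [this, LinearMap.zero_apply, neg_zero]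
        · have h0 := hv' (e 0)
          have hy0 : H₁ y (e 0) = 0 := by rw [hH₁y]; rfl
          have hxe : H₂ (x + y) (e 0) = 0 := by
            rw [map_add, LinearMap.add_apply, skew_of_alt H₂ hH₂alt x,
              skew_of_alt H₂ hH₂alt y, hH₂e 0]
            simp
          rw [map_add, LinearMap.add_apply, hy0, add_zero] at h0
          rw [hxe, mul_zero, add_zero, mul_eq_zero] at h0
          exact h0.resolve_left ha
        · have h0 := hv' (e 1)
          have hy0 : H₁ y (e 1) = 0 := by rw [hH₁y]; rfl
          have hxe : H₂ (x + y) (e 1) = 0 := by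
            rw [map_add, LinearMap.add_apply, skew_of_alt H₂ hH₂alt x,
              skew_of_alt H₂ hH₂alt y, hH₂e 1]
            simp
          rw [map_add, LinearMap.add_apply, hy0, add_zero] at h0
          rw [hxe, mul_zero, add_zero, mul_eq_zero] at h0
          exact h0.resolve_left ha
      have hxL₂ : x ∈ L₂ := by rw [← hH₁rad]; exact hfx
      have : x ∈ L₁ ⊓ L₂ := ⟨hx, hxL₂⟩
      rw [hinf] at this
      exact this
    have hy0 : y = 0 := by
      have hfy : H₂ y = 0 := by
        refine vanish' (H₂ y) L₁ (f 0) (f 1) hsupF ?_ ?_ ?_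
        · intro w hw
          rw [LinearMap.mem_ker, skew_of_alt H₂ hH₂alt]
          have : H₂ w = 0 := hL₁H₂ hw
          rw [this, LinearMap.zero_apply, neg_zero]
        · have h0 := hv' (f 0)
          have hx1 : H₁ (x + y) (f 0) = 0 := by
            rw [map_add, LinearMap.add_apply, skew_of_alt H₁ hH₁alt x,
              skew_of_alt H₁ hH₁alt y, hH₁f 0]
            simp
          have hx2 : H₂ x (f 0) = 0 := by rw [hH₂x]; rfl
          rw [hx1, mul_zero, zero_add, map_add, LinearMap.add_apply, hx2,
            zero_add, mul_eq_zero] at h0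
          exact h0.resolve_left hb
        · have h0 := hv' (f 1)
          have hx1 : H₁ (x + y) (f 1) = 0 := by
            rw [map_add, LinearMap.add_apply, skew_of_alt H₁ hH₁alt x,
              skew_of_alt H₁ hH₁alt y, hH₁f 1]
            simp
          have hx2 : H₂ x (f 1) = 0 := by rw [hH₂x]; rfl
          rw [hx1, mul_zero, zero_add, map_add, LinearMap.add_apply, hx2,
            zero_add, mul_eq_zero] at h0
          exact h0.resolve_left hb
      have hyL₁ : y ∈ L₁ := by rw [← hH₂rad]; exact hfy
      have : y ∈ L₁ ⊓ L₂ := ⟨hyL₁, hy⟩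
      rw [hinf] at this
      exact this
    rw [hx0, hy0, add_zero]
  have hH₁mem : H₁ ∈ Submodule.span K {H₁, H₂} :=
    Submodule.subset_span (by simp)
  have hH₂mem : H₂ ∈ Submodule.span K {H₁, H₂} :=
    Submodule.subset_span (by simp)
  intro N
  constructor
  · rintro ⟨haltN, hdimN, -, hset⟩
    -- find elements of N with kernels L₁ and L₂, show they are multiples of H₂, H₁
    have hmem₁ : L₁ ∈ {W : Submodule K V | ∃ A ∈ N, A ≠ 0 ∧ LinearMap.ker A ≠ ⊥ ∧
        LinearMap.ker A = W} := by rw [hset]; left; rfl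
    have hmem₂ : L₂ ∈ {W : Submodule K V | ∃ A ∈ N, A ≠ 0 ∧ LinearMap.ker A ≠ ⊥ ∧
        LinearMap.ker A = W} := by rw [hset]; right; rfl
    obtain ⟨A₁, hA₁N, hA₁ne, -, hA₁ker⟩ := hmem₁
    obtain ⟨A₂, hA₂N, hA₂ne, -, hA₂ker⟩ := hmem₂
    obtain ⟨c, hc⟩ := exists_scalar H₂ A₁ hH₂alt (haltN A₁ hA₁N) L₁ (f 0) (f 1)
      hsupF hL₁H₂ (le_of_eq hA₁ker.symm) hne2
    obtain ⟨d, hd⟩ := exists_scalar H₁ A₂ hH₁alt (haltN A₂ hA₂N) L₂ (e 0) (e 1)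
      hsupE hL₂H₁ (le_of_eq hA₂ker.symm) hne1
    have hc0 : c ≠ 0 := by
      rintro rfl
      rw [zero_smul] at hc
      exact hA₁ne hc
    have hd0 : d ≠ 0 := by
      rintro rfl
      rw [zero_smul] at hd
      exact hA₂ne hd
    have hH₂N : H₂ ∈ N := by
      have : H₂ = c⁻¹ • A₁ := by
        rw [hc, smul_smul, inv_mul_cancel₀ hc0, one_smul]
      rw [this]
      exact N.smul_mem _ hA₁N
    have hH₁N : H₁ ∈ N := by
      have : H₁ = d⁻¹ • A₂ := by
        rw [hd, smul_smul, inv_mul_cancel₀ hd0, one_smul]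
      rw [this]
      exact N.smul_mem _ hA₂N
    have hle : Submodule.span K {H₁, H₂} ≤ N := by
      rw [Submodule.span_le]
      rintro x (rfl | rfl)
      · exact hH₁N
      · exact hH₂N
    exact (Submodule.eq_of_le_of_finrank_le (K := K) (V := V →ₗ[K] V →ₗ[K] K) hle (by rw [hrank, hdimN])).symm
  · rintro rfl
    refine ⟨?_, hrank, ?_, ?_⟩
    · intro A hA v
      obtain ⟨a, b, rfl⟩ := Submodule.mem_span_pair.mp hA
      simp [LinearMap.add_apply, LinearMap.smul_apply, hH₁alt v, hH₂alt v]
    · intro A hA hAne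
      obtain ⟨a, b, rfl⟩ := Submodule.mem_span_pair.mp hA
      by_cases ha : a = 0
      · by_cases hb : b = 0
        · exact absurd (by rw [ha, hb, zero_smul, zero_smul, add_zero]) hAne
        · rw [ha, zero_smul, zero_add, LinearMap.ker_smul _ _ hb, hH₂rad, hL₁]
      · by_cases hb : b = 0
        · rw [hb, zero_smul, add_zero, LinearMap.ker_smul _ _ ha, hH₁rad, hL₂]
        · rw [hkerbot a b ha hb, finrank_bot]
          omega
    · ext W
      simp only [Set.mem_setOf_eq, Set.mem_insert_iff, Set.mem_singleton_iff]
      constructor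
      · rintro ⟨A, hAN, hAne, hAkb, rfl⟩
        obtain ⟨a, b, rfl⟩ := Submodule.mem_span_pair.mp hAN
        by_cases ha : a = 0
        · by_cases hb : b = 0
          · exact absurd (by rw [ha, hb, zero_smul, zero_smul, add_zero]) hAne
          · left
            rw [ha, zero_smul, zero_add, LinearMap.ker_smul _ _ hb, hH₂rad]
        · by_cases hb : b = 0
          · right
            rw [hb, zero_smul, add_zero, LinearMap.ker_smul _ _ ha, hH₁rad]
          · exact absurd (hkerbot a b ha hb) hAkb
      · rintro (rfl | rfl)
        · exact ⟨H₂, hH₂mem, hH₂ne, by rw [hH₂rad]; exact hL₁ne, hH₂rad⟩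
        · exact ⟨H₁, hH₁mem, hH₁ne, by rw [hH₁rad]; exact hL₂ne, hH₁rad⟩
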